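/- The set of positive roots R⁺ = R ∩ Σ_{i∈I} ℕ·α_i has exactly 120 elements, and R is the disjoint union of R⁺ and −R⁺. -/
import Mathlib


open Matrix BigOperators

/-- The E8 Cartan matrix (vertices 0..7; path 0-2-3-4-5-6-7 with 1 attached to 3,
matching Bourbaki labeling shifted by one). -/
def E8C : Matrix (Fin 8) (Fin 8) ℤ :=
  !![ 2,  0, -1,  0,  0,  0,  0,  0;
      0,  2,  0, -1,  0,  0,  0,  0;
     -1,  0,  2, -1,  0,  0,  0,  0;
      0, -1, -1,  2, -1,  0,  0,  0;
      0,  0,  0, -1,  2, -1,  0,  0;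
      0,  0,  0,  0, -1,  2, -1,  0;
      0,  0,  0,  0,  0, -1,  2, -1;
      0,  0,  0,  0,  0,  0, -1,  2]

/-- The E8 bilinear form on V = ℤ^8. -/
def B (x y : Fin 8 → ℤ) : ℤ := ∑ i, ∑ j, x i * E8C i j * y j

/-- The set of roots. -/
def E8R : Set (Fin 8 → ℤ) := {α | B α α = 2}

/-- The set of positive roots. -/
def E8Rpos : Set (Fin 8 → ℤ) := {α | α ∈ E8R ∧ ∀ i, 0 ≤ α i}

/-- The simple roots (standard basis vectors). -/
def sr (i : Fin 8) : Fin 8 → ℤ := fun j => if j = i then 1 else 0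

set_option maxRecDepth 100000
set_option maxHeartbeats 1000000

def L120 : List (Fin 8 → ℤ) := [
  ![0, 0, 0, 0, 0, 0, 0, 1],
  ![0, 0, 0, 0, 0, 0, 1, 0],
  ![0, 0, 0, 0, 0, 0, 1, 1],
  ![0, 0, 0, 0, 0, 1, 0, 0],
  ![0, 0, 0, 0, 0, 1, 1, 0],
  ![0, 0, 0, 0, 0, 1, 1, 1],
  ![0, 0, 0, 0, 1, 0, 0, 0],
  ![0, 0, 0, 0, 1, 1, 0, 0],
  ![0, 0, 0, 0, 1, 1, 1, 0],
  ![0, 0, 0, 0, 1, 1, 1, 1],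
  ![0, 0, 0, 1, 0, 0, 0, 0],
  ![0, 0, 0, 1, 1, 0, 0, 0],
  ![0, 0, 0, 1, 1, 1, 0, 0],
  ![0, 0, 0, 1, 1, 1, 1, 0],
  ![0, 0, 0, 1, 1, 1, 1, 1],
  ![0, 0, 1, 0, 0, 0, 0, 0],
  ![0, 0, 1, 1, 0, 0, 0, 0],
  ![0, 0, 1, 1, 1, 0, 0, 0],
  ![0, 0, 1, 1, 1, 1, 0, 0],
  ![0, 0, 1, 1, 1, 1, 1, 0],
  ![0, 0, 1, 1, 1, 1, 1, 1],
  ![0, 1, 0, 0, 0, 0, 0, 0],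
  ![0, 1, 0, 1, 0, 0, 0, 0],
  ![0, 1, 0, 1, 1, 0, 0, 0],
  ![0, 1, 0, 1, 1, 1, 0, 0],
  ![0, 1, 0, 1, 1, 1, 1, 0],
  ![0, 1, 0, 1, 1, 1, 1, 1],
  ![0, 1, 1, 1, 0, 0, 0, 0],
  ![0, 1, 1, 1, 1, 0, 0, 0],
  ![0, 1, 1, 1, 1, 1, 0, 0],
  ![0, 1, 1, 1, 1, 1, 1, 0],
  ![0, 1, 1, 1, 1, 1, 1, 1],
  ![0, 1, 1, 2, 1, 0, 0, 0],
  ![0, 1, 1, 2, 1, 1, 0, 0],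
  ![0, 1, 1, 2, 1, 1, 1, 0],
  ![0, 1, 1, 2, 1, 1, 1, 1],
  ![0, 1, 1, 2, 2, 1, 0, 0],
  ![0, 1, 1, 2, 2, 1, 1, 0],
  ![0, 1, 1, 2, 2, 1, 1, 1],
  ![0, 1, 1, 2, 2, 2, 1, 0],
  ![0, 1, 1, 2, 2, 2, 1, 1],
  ![0, 1, 1, 2, 2, 2, 2, 1],
  ![1, 0, 0, 0, 0, 0, 0, 0],
  ![1, 0, 1, 0, 0, 0, 0, 0],
  ![1, 0, 1, 1, 0, 0, 0, 0],
  ![1, 0, 1, 1, 1, 0, 0, 0],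
  ![1, 0, 1, 1, 1, 1, 0, 0],
  ![1, 0, 1, 1, 1, 1, 1, 0],
  ![1, 0, 1, 1, 1, 1, 1, 1],
  ![1, 1, 1, 1, 0, 0, 0, 0],
  ![1, 1, 1, 1, 1, 0, 0, 0],
  ![1, 1, 1, 1, 1, 1, 0, 0],
  ![1, 1, 1, 1, 1, 1, 1, 0],
  ![1, 1, 1, 1, 1, 1, 1, 1],
  ![1, 1, 1, 2, 1, 0, 0, 0],
  ![1, 1, 1, 2, 1, 1, 0, 0],
  ![1, 1, 1, 2, 1, 1, 1, 0],
  ![1, 1, 1, 2, 1, 1, 1, 1],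
  ![1, 1, 1, 2, 2, 1, 0, 0],
  ![1, 1, 1, 2, 2, 1, 1, 0],
  ![1, 1, 1, 2, 2, 1, 1, 1],
  ![1, 1, 1, 2, 2, 2, 1, 0],
  ![1, 1, 1, 2, 2, 2, 1, 1],
  ![1, 1, 1, 2, 2, 2, 2, 1],
  ![1, 1, 2, 2, 1, 0, 0, 0],
  ![1, 1, 2, 2, 1, 1, 0, 0],
  ![1, 1, 2, 2, 1, 1, 1, 0],
  ![1, 1, 2, 2, 1, 1, 1, 1],
  ![1, 1, 2, 2, 2, 1, 0, 0],
  ![1, 1, 2, 2, 2, 1, 1, 0],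
  ![1, 1, 2, 2, 2, 1, 1, 1],
  ![1, 1, 2, 2, 2, 2, 1, 0],
  ![1, 1, 2, 2, 2, 2, 1, 1],
  ![1, 1, 2, 2, 2, 2, 2, 1],
  ![1, 1, 2, 3, 2, 1, 0, 0],
  ![1, 1, 2, 3, 2, 1, 1, 0],
  ![1, 1, 2, 3, 2, 1, 1, 1],
  ![1, 1, 2, 3, 2, 2, 1, 0],
  ![1, 1, 2, 3, 2, 2, 1, 1],
  ![1, 1, 2, 3, 2, 2, 2, 1],
  ![1, 1, 2, 3, 3, 2, 1, 0],
  ![1, 1, 2, 3, 3, 2, 1, 1],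
  ![1, 1, 2, 3, 3, 2, 2, 1],
  ![1, 1, 2, 3, 3, 3, 2, 1],
  ![1, 2, 2, 3, 2, 1, 0, 0],
  ![1, 2, 2, 3, 2, 1, 1, 0],
  ![1, 2, 2, 3, 2, 1, 1, 1],
  ![1, 2, 2, 3, 2, 2, 1, 0],
  ![1, 2, 2, 3, 2, 2, 1, 1],
  ![1, 2, 2, 3, 2, 2, 2, 1],
  ![1, 2, 2, 3, 3, 2, 1, 0],
  ![1, 2, 2, 3, 3, 2, 1, 1],
  ![1, 2, 2, 3, 3, 2, 2, 1],
  ![1, 2, 2, 3, 3, 3, 2, 1],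
  ![1, 2, 2, 4, 3, 2, 1, 0],
  ![1, 2, 2, 4, 3, 2, 1, 1],
  ![1, 2, 2, 4, 3, 2, 2, 1],
  ![1, 2, 2, 4, 3, 3, 2, 1],
  ![1, 2, 2, 4, 4, 3, 2, 1],
  ![1, 2, 3, 4, 3, 2, 1, 0],
  ![1, 2, 3, 4, 3, 2, 1, 1],
  ![1, 2, 3, 4, 3, 2, 2, 1],
  ![1, 2, 3, 4, 3, 3, 2, 1],
  ![1, 2, 3, 4, 4, 3, 2, 1],
  ![1, 2, 3, 5, 4, 3, 2, 1],
  ![1, 3, 3, 5, 4, 3, 2, 1],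
  ![2, 2, 3, 4, 3, 2, 1, 0],
  ![2, 2, 3, 4, 3, 2, 1, 1],
  ![2, 2, 3, 4, 3, 2, 2, 1],
  ![2, 2, 3, 4, 3, 3, 2, 1],
  ![2, 2, 3, 4, 4, 3, 2, 1],
  ![2, 2, 3, 5, 4, 3, 2, 1],
  ![2, 2, 4, 5, 4, 3, 2, 1],
  ![2, 3, 3, 5, 4, 3, 2, 1],
  ![2, 3, 4, 5, 4, 3, 2, 1],
  ![2, 3, 4, 6, 4, 3, 2, 1],
  ![2, 3, 4, 6, 5, 3, 2, 1],
  ![2, 3, 4, 6, 5, 4, 2, 1],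
  ![2, 3, 4, 6, 5, 4, 3, 1],
  ![2, 3, 4, 6, 5, 4, 3, 2]]

def Tbl : List (List ℕ) := [
  [0, 0, 0, 0, 0, 0, 2, 0],
  [1, 1, 1, 1, 1, 4, 1, 2],
  [2, 2, 2, 2, 2, 5, 0, 1],
  [3, 3, 3, 3, 7, 3, 4, 3],
  [4, 4, 4, 4, 8, 1, 3, 5],
  [5, 5, 5, 5, 9, 2, 5, 4],
  [6, 6, 6, 11, 6, 7, 6, 6],
  [7, 7, 7, 12, 3, 6, 8, 7],
  [8, 8, 8, 13, 4, 8, 7, 9],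
  [9, 9, 9, 14, 5, 9, 9, 8],
  [10, 22, 16, 10, 11, 10, 10, 10],
  [11, 23, 17, 6, 10, 12, 11, 11],
  [12, 24, 18, 7, 12, 11, 13, 12],
  [13, 25, 19, 8, 13, 13, 12, 14],
  [14, 26, 20, 9, 14, 14, 14, 13],
  [43, 15, 15, 16, 15, 15, 15, 15],
  [44, 27, 10, 15, 17, 16, 16, 16],
  [45, 28, 11, 17, 16, 18, 17, 17],
  [46, 29, 12, 18, 18, 17, 19, 18],
  [47, 30, 13, 19, 19, 19, 18, 20],
  [48, 31, 14, 20, 20, 20, 20, 19],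
  [21, 21, 21, 22, 21, 21, 21, 21],
  [22, 10, 27, 21, 23, 22, 22, 22],
  [23, 11, 28, 23, 22, 24, 23, 23],
  [24, 12, 29, 24, 24, 23, 25, 24],
  [25, 13, 30, 25, 25, 25, 24, 26],
  [26, 14, 31, 26, 26, 26, 26, 25],
  [49, 16, 22, 27, 28, 27, 27, 27],
  [50, 17, 23, 32, 27, 29, 28, 28],
  [51, 18, 24, 33, 29, 28, 30, 29],
  [52, 19, 25, 34, 30, 30, 29, 31],
  [53, 20, 26, 35, 31, 31, 31, 30],
  [54, 32, 32, 28, 32, 33, 32, 32],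
  [55, 33, 33, 29, 36, 32, 34, 33],
  [56, 34, 34, 30, 37, 34, 33, 35],
  [57, 35, 35, 31, 38, 35, 35, 34],
  [58, 36, 36, 36, 33, 36, 37, 36],
  [59, 37, 37, 37, 34, 39, 36, 38],
  [60, 38, 38, 38, 35, 40, 38, 37],
  [61, 39, 39, 39, 39, 37, 39, 40],
  [62, 40, 40, 40, 40, 38, 41, 39],
  [63, 41, 41, 41, 41, 41, 40, 41],
  [42, 42, 43, 42, 42, 42, 42, 42],
  [15, 43, 42, 44, 43, 43, 43, 43],
  [16, 49, 44, 43, 45, 44, 44, 44],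
  [17, 50, 45, 45, 44, 46, 45, 45],
  [18, 51, 46, 46, 46, 45, 47, 46],
  [19, 52, 47, 47, 47, 47, 46, 48],
  [20, 53, 48, 48, 48, 48, 48, 47],
  [27, 44, 49, 49, 50, 49, 49, 49],
  [28, 45, 50, 54, 49, 51, 50, 50],
  [29, 46, 51, 55, 51, 50, 52, 51],
  [30, 47, 52, 56, 52, 52, 51, 53],
  [31, 48, 53, 57, 53, 53, 53, 52],
  [32, 54, 64, 50, 54, 55, 54, 54],
  [33, 55, 65, 51, 58, 54, 56, 55],
  [34, 56, 66, 52, 59, 56, 55, 57],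
  [35, 57, 67, 53, 60, 57, 57, 56],
  [36, 58, 68, 58, 55, 58, 59, 58],
  [37, 59, 69, 59, 56, 61, 58, 60],
  [38, 60, 70, 60, 57, 62, 60, 59],
  [39, 61, 71, 61, 61, 59, 61, 62],
  [40, 62, 72, 62, 62, 60, 63, 61],
  [41, 63, 73, 63, 63, 63, 62, 63],
  [64, 64, 54, 64, 64, 65, 64, 64],
  [65, 65, 55, 65, 68, 64, 66, 65],
  [66, 66, 56, 66, 69, 66, 65, 67],
  [67, 67, 57, 67, 70, 67, 67, 66],
  [68, 68, 58, 74, 65, 68, 69, 68],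
  [69, 69, 59, 75, 66, 71, 68, 70],
  [70, 70, 60, 76, 67, 72, 70, 69],
  [71, 71, 61, 77, 71, 69, 71, 72],
  [72, 72, 62, 78, 72, 70, 73, 71],
  [73, 73, 63, 79, 73, 73, 72, 73],
  [74, 84, 74, 68, 74, 74, 75, 74],
  [75, 85, 75, 69, 75, 77, 74, 76],
  [76, 86, 76, 70, 76, 78, 76, 75],
  [77, 87, 77, 71, 80, 75, 77, 78],
  [78, 88, 78, 72, 81, 76, 79, 77],
  [79, 89, 79, 73, 82, 79, 78, 79],
  [80, 90, 80, 80, 77, 80, 80, 81],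
  [81, 91, 81, 81, 78, 81, 82, 80],
  [82, 92, 82, 82, 79, 83, 81, 82],
  [83, 93, 83, 83, 83, 82, 83, 83],
  [84, 74, 84, 84, 84, 84, 85, 84],
  [85, 75, 85, 85, 85, 87, 84, 86],
  [86, 76, 86, 86, 86, 88, 86, 85],
  [87, 77, 87, 87, 90, 85, 87, 88],
  [88, 78, 88, 88, 91, 86, 89, 87],
  [89, 79, 89, 89, 92, 89, 88, 89],
  [90, 80, 90, 94, 87, 90, 90, 91],
  [91, 81, 91, 95, 88, 91, 92, 90],
  [92, 82, 92, 96, 89, 93, 91, 92],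
  [93, 83, 93, 97, 93, 92, 93, 93],
  [94, 94, 99, 90, 94, 94, 94, 95],
  [95, 95, 100, 91, 95, 95, 96, 94],
  [96, 96, 101, 92, 96, 97, 95, 96],
  [97, 97, 102, 93, 98, 96, 97, 97],
  [98, 98, 103, 98, 97, 98, 98, 98],
  [106, 99, 94, 99, 99, 99, 99, 100],
  [107, 100, 95, 100, 100, 100, 101, 99],
  [108, 101, 96, 101, 101, 102, 100, 101],
  [109, 102, 97, 102, 103, 101, 102, 102],
  [110, 103, 98, 104, 102, 103, 103, 103],
  [111, 105, 104, 103, 104, 104, 104, 104],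
  [113, 104, 105, 105, 105, 105, 105, 105],
  [99, 106, 106, 106, 106, 106, 106, 107],
  [100, 107, 107, 107, 107, 107, 108, 106],
  [101, 108, 108, 108, 108, 109, 107, 108],
  [102, 109, 109, 109, 110, 108, 109, 109],
  [103, 110, 110, 111, 109, 110, 110, 110],
  [104, 113, 112, 110, 111, 111, 111, 111],
  [112, 114, 111, 112, 112, 112, 112, 112],
  [105, 111, 114, 113, 113, 113, 113, 113],
  [114, 112, 113, 115, 114, 114, 114, 114],
  [115, 115, 115, 114, 116, 115, 115, 115],
  [116, 116, 116, 116, 115, 117, 116, 116],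
  [117, 117, 117, 117, 117, 116, 118, 117],
  [118, 118, 118, 118, 118, 118, 117, 119],
  [119, 119, 119, 119, 119, 119, 119, 118]]

def Bq (x y : Fin 8 → ℤ) : ℤ :=
  2*x 0*y 0 + 2*x 1*y 1 + 2*x 2*y 2 + 2*x 3*y 3 + 2*x 4*y 4 + 2*x 5*y 5 + 2*x 6*y 6 + 2*x 7*y 7
  - (x 0*y 2 + x 2*y 0) - (x 2*y 3 + x 3*y 2) - (x 1*y 3 + x 3*y 1) - (x 3*y 4 + x 4*y 3)
  - (x 4*y 5 + x 5*y 4) - (x 5*y 6 + x 6*y 5) - (x 6*y 7 + x 7*y 6)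

lemma B_eq (x y : Fin 8 → ℤ) : B x y = Bq x y := by
  simp only [B, Fin.sum_univ_eight, show E8C 0 0 = (2) from by decide, show E8C 0 1 = (0) from by decide, show E8C 0 2 = (-1) from by decide, show E8C 0 3 = (0) from by decide, show E8C 0 4 = (0) from by decide, show E8C 0 5 = (0) from by decide, show E8C 0 6 = (0) from by decide, show E8C 0 7 = (0) from by decide, show E8C 1 0 = (0) from by decide, show E8C 1 1 = (2) from by decide, show E8C 1 2 = (0) from by decide, show E8C 1 3 = (-1) from by decide, show E8C 1 4 = (0) from by decide, show E8C 1 5 = (0) from by decide, show E8C 1 6 = (0) from by decide, show E8C 1 7 = (0) from by decide, show E8C 2 0 = (-1) from by decide, show E8C 2 1 = (0) from by decide, show E8C 2 2 = (2) from by decide, show E8C 2 3 = (-1) from by decide, show E8C 2 4 = (0) from by decide, show E8C 2 5 = (0) from by decide, show E8C 2 6 = (0) from by decide, show E8C 2 7 = (0) from by decide, show E8C 3 0 = (0) from by decide, show E8C 3 1 = (-1) from by decide, show E8C 3 2 = (-1) from by decide, show E8C 3 3 = (2) from by decide, show E8C 3 4 = (-1) from by decide, show E8C 3 5 = (0) from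 by decide, show E8C 3 6 = (0) from by decide, show E8C 3 7 = (0) from by decide, show E8C 4 0 = (0) from by decide, show E8C 4 1 = (0) from by decide, show E8C 4 2 = (0) from by decide, show E8C 4 3 = (-1) from by decide, show E8C 4 4 = (2) from by decide, show E8C 4 5 = (-1) from by decide, show E8C 4 6 = (0) from by decide, show E8C 4 7 = (0) from by decide, show E8C 5 0 = (0) from by decide, show E8C 5 1 = (0) from by decide, show E8C 5 2 = (0) from by decide, show E8C 5 3 = (0) from by decide, show E8C 5 4 = (-1) from by decide, show E8C 5 5 = (2) from by decide, show E8C 5 6 = (-1) from by decide, show E8C 5 7 = (0) from by decide, show E8C 6 0 = (0) from by decide, show E8C 6 1 = (0) from by decide, show E8C 6 2 = (0) from by decide, show E8C 6 3 = (0) from by decide, show E8C 6 4 = (0) from by decide, show E8C 6 5 = (-1) from by decide, show E8C 6 6 = (2) from by decide, show E8C 6 7 = (-1) from by decide, show E8C 7 0 = (0) from by decide, show E8C 7 1 = (0) from by decide, show E8C 7 2 = (0) from by decide, show E8C 7 3 = (0) from by decide, show E8C 7 4 = (0) from by decide, show E8C 7 5 = (0) from by decide, show E8C 7 6 = (-1)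 from by decide, show E8C 7 7 = (2) from by decide]
  simp only [Bq]
  ring

def g (k : ℕ) : Fin 8 → ℤ := L120.getD k 0

def tb (k i : ℕ) : ℕ := (Tbl.getD k []).getD i 0

def rf (i : Fin 8) (x : Fin 8 → ℤ) : Fin 8 → ℤ :=
  fun j => x j - (if j = i then Bq x (sr i) else 0)

def ht (x : Fin 8 → ℤ) : ℤ :=
  x 0 + x 1 + x 2 + x 3 + x 4 + x 5 + x 6 + x 7

-- decidable facts
lemma F1 : ∀ v ∈ L120, Bq v v = 2 ∧ ∀ i, 0 ≤ v i := by decide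

lemma F2 : ∀ k : Fin 120, ∀ i : Fin 8,
    (∀ j, rf i (g k.val) j = g (tb k.val i.val) j) ∨
    (∀ j, rf i (g k.val) j = -(g (tb k.val i.val) j)) := by decide

lemma F3 : ∀ k : Fin 120, ∀ i : Fin 8, tb k.val i.val < 120 := by decide

lemma F4 : ∀ i : Fin 8, sr i ∈ L120 := by decide

lemma F5 : L120.Nodup := by decide

lemma L120_length : L120.length = 120 := by rfl

lemma g_mem {m : ℕ} (h : m < 120) : g m ∈ L120 := by
  have h' : m < L120.length := by rw [L120_length]; exact h
  have : g m = L120[m] := by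
    simp [g, List.getD_eq_getElem?_getD, List.getElem?_eq_getElem h']
  rw [this]
  exact List.getElem_mem h'

lemma mem_g {v : Fin 8 → ℤ} (h : v ∈ L120) : ∃ k : Fin 120, g k.val = v := by
  obtain ⟨n, hn, he⟩ := List.mem_iff_getElem.mp h
  refine ⟨⟨n, by rwa [L120_length] at hn⟩, ?_⟩
  simp only [g, List.getD_eq_getElem?_getD, List.getElem?_eq_getElem hn]
  exact he

-- SOS certificate / positive definiteness
lemma Bq_nonneg (x : Fin 8 → ℤ) : 0 ≤ Bq x x := by
  have key : 60 * Bq x x =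
      30*(2*x 0 - x 2)^2 + 30*(2*x 1 - x 3)^2 + 10*(3*x 2 - 2*x 3)^2 + 2*(5*x 3 - 6*x 4)^2
      + 3*(4*x 4 - 5*x 5)^2 + 5*(3*x 5 - 4*x 6)^2 + 10*(2*x 6 - 3*x 7)^2 + 30*(x 7)^2 := by
    simp only [Bq]; ring
  nlinarith [sq_nonneg (2*x 0 - x 2), sq_nonneg (2*x 1 - x 3), sq_nonneg (3*x 2 - 2*x 3),
    sq_nonneg (5*x 3 - 6*x 4), sq_nonneg (4*x 4 - 5*x 5), sq_nonneg (3*x 5 - 4*x 6),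
    sq_nonneg (2*x 6 - 3*x 7), sq_nonneg (x 7)]

lemma zero_of_small (x : Fin 8 → ℤ) (hs : Bq x x ≤ 1) : ∀ j, x j = 0 := by
  have hn := Bq_nonneg x
  have hev : Bq x x = 2 * (x 0*x 0 + x 1*x 1 + x 2*x 2 + x 3*x 3 + x 4*x 4 + x 5*x 5
      + x 6*x 6 + x 7*x 7 - x 0*x 2 - x 2*x 3 - x 1*x 3 - x 3*x 4 - x 4*x 5 - x 5*x 6
      - x 6*x 7) := by simp only [Bq]; ring
  obtain ⟨e, he⟩ : ∃ e, (x 0*x 0 + x 1*x 1 + x 2*x 2 + x 3*x 3 + x 4*x 4 + x 5*x 5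
      + x 6*x 6 + x 7*x 7 - x 0*x 2 - x 2*x 3 - x 1*x 3 - x 3*x 4 - x 4*x 5 - x 5*x 6
      - x 6*x 7) = e := ⟨_, rfl⟩
  rw [he] at hev
  have hz : Bq x x = 0 := by omega
  have key : 60 * Bq x x =
      30*(2*x 0 - x 2)^2 + 30*(2*x 1 - x 3)^2 + 10*(3*x 2 - 2*x 3)^2 + 2*(5*x 3 - 6*x 4)^2
      + 3*(4*x 4 - 5*x 5)^2 + 5*(3*x 5 - 4*x 6)^2 + 10*(2*x 6 - 3*x 7)^2 + 30*(x 7)^2 := by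
    simp only [Bq]; ring
  rw [hz] at key
  have q1 := sq_nonneg (2*x 0 - x 2); have q2 := sq_nonneg (2*x 1 - x 3)
  have q3 := sq_nonneg (3*x 2 - 2*x 3); have q4 := sq_nonneg (5*x 3 - 6*x 4)
  have q5 := sq_nonneg (4*x 4 - 5*x 5); have q6 := sq_nonneg (3*x 5 - 4*x 6)
  have q7 := sq_nonneg (2*x 6 - 3*x 7); have q8 := sq_nonneg (x 7)
  have e8 : (x 7)^2 = 0 := by linarith
  have e7 : (2*x 6 - 3*x 7)^2 = 0 := by linarith
  have e6 : (3*x 5 - 4*x 6)^2 = 0 := by linarith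
  have e5 : (4*x 4 - 5*x 5)^2 = 0 := by linarith
  have e4 : (5*x 3 - 6*x 4)^2 = 0 := by linarith
  have e3 : (3*x 2 - 2*x 3)^2 = 0 := by linarith
  have e2 : (2*x 1 - x 3)^2 = 0 := by linarith
  have e1 : (2*x 0 - x 2)^2 = 0 := by linarith
  have hn2 : (2 : ℕ) ≠ 0 := by norm_num
  have f8 : x 7 = 0 := (pow_eq_zero_iff hn2).mp e8
  have f7 : 2*x 6 - 3*x 7 = 0 := (pow_eq_zero_iff hn2).mp e7
  have f6 : 3*x 5 - 4*x 6 = 0 := (pow_eq_zero_iff hn2).mp e6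
  have f5 : 4*x 4 - 5*x 5 = 0 := (pow_eq_zero_iff hn2).mp e5
  have f4 : 5*x 3 - 6*x 4 = 0 := (pow_eq_zero_iff hn2).mp e4
  have f3 : 3*x 2 - 2*x 3 = 0 := (pow_eq_zero_iff hn2).mp e3
  have f2 : 2*x 1 - x 3 = 0 := (pow_eq_zero_iff hn2).mp e2
  have f1 : 2*x 0 - x 2 = 0 := (pow_eq_zero_iff hn2).mp e1
  have g8 : x 7 = 0 := f8
  have g7 : x 6 = 0 := by linarith
  have g6 : x 5 = 0 := by linarith
  have g5 : x 4 = 0 := by linarith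
  have g4 : x 3 = 0 := by linarith
  have g3 : x 2 = 0 := by linarith
  have g2 : x 1 = 0 := by linarith
  have g1 : x 0 = 0 := by linarith
  intro j; fin_cases j <;> assumption

lemma two_le_Bq {x : Fin 8 → ℤ} {i : Fin 8} (h : x i ≠ 0) : 2 ≤ Bq x x := by
  by_contra hc
  exact h (zero_of_small x (by omega) i)

lemma sign_lemma (x : Fin 8 → ℤ) (hroot : Bq x x = 2) :
    (∀ i, 0 ≤ x i) ∨ (∀ i, x i ≤ 0) := by
  by_contra hcon
  push_neg at hcon
  obtain ⟨⟨a, ha⟩, ⟨b, hb⟩⟩ := hcon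
  set p : Fin 8 → ℤ := fun i => max (x i) 0 with hp_def
  set q : Fin 8 → ℤ := fun i => max (-x i) 0 with hq_def
  have hx : ∀ i, x i = p i - q i := by intro i; simp only [hp_def, hq_def]; omega
  have hp : ∀ i, 0 ≤ p i := fun i => le_max_right _ _
  have hq : ∀ i, 0 ≤ q i := fun i => le_max_right _ _
  have hpq : ∀ i, p i * q i = 0 := by
    intro i
    rcases le_total (x i) 0 with h | h
    · have : p i = 0 := max_eq_right h
      rw [this, zero_mul]
    · have : q i = 0 := max_eq_right (by linarith)
      rw [this, mul_zero]
  have hsplit : Bq x x = Bq p p + Bq q q - 2 * Bq p q := by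
    simp only [Bq]
    rw [hx 0, hx 1, hx 2, hx 3, hx 4, hx 5, hx 6, hx 7]
    ring
  have key : ∀ i j, 0 ≤ p i * q j := fun i j => mul_nonneg (hp i) (hq j)
  have hBpq : Bq p q ≤ 0 := by
    simp only [Bq]
    linarith [hpq 0, hpq 1, hpq 2, hpq 3, hpq 4, hpq 5, hpq 6, hpq 7,
      key 0 2, key 2 0, key 2 3, key 3 2, key 1 3, key 3 1, key 3 4, key 4 3,
      key 4 5, key 5 4, key 5 6, key 6 5, key 6 7, key 7 6]
  have hpa : p b ≠ 0 := by
    have : 0 < p b := lt_max_of_lt_left hb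
    omega
  have hqa : q a ≠ 0 := by
    have : 0 < q a := lt_max_of_lt_left (by linarith)
    omega
  have h2p := two_le_Bq hpa
  have h2q := two_le_Bq hqa
  linarith

lemma Bq_negneg (x : Fin 8 → ℤ) : Bq (-x) (-x) = Bq x x := by
  simp only [Bq, Pi.neg_apply]; ring

-- reflection lemmas
lemma Bq_rf (i : Fin 8) (x : Fin 8 → ℤ) : Bq (rf i x) (rf i x) = Bq x x := by
  fin_cases i <;> simp [rf, Bq, sr] <;> ring

lemma ht_rf (i : Fin 8) (x : Fin 8 → ℤ) : ht (rf i x) = ht x - Bq x (sr i) := by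
  fin_cases i <;> simp [ht, rf, Bq, sr] <;> ring

lemma Bq_rf_sr (i : Fin 8) (x : Fin 8 → ℤ) : Bq (rf i x) (sr i) = - Bq x (sr i) := by
  fin_cases i <;> simp [rf, Bq, sr] <;> ring

lemma rf_rf (i : Fin 8) (x : Fin 8 → ℤ) : rf i (rf i x) = x := by
  funext j
  by_cases h : j = i
  · subst h
    have h1 : rf j (rf j x) j = rf j x j - Bq (rf j x) (sr j) := by simp [rf]
    rw [h1, Bq_rf_sr]
    have h2 : rf j x j = x j - Bq x (sr j) := by simp [rf]
    rw [h2]; ring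
  · simp only [rf, if_neg h, sub_zero]

lemma exists_pos_inner (α : Fin 8 → ℤ) (hroot : Bq α α = 2) (hpos : ∀ i, 0 ≤ α i) :
    ∃ i, 0 < Bq α (sr i) := by
  by_contra h
  push_neg at h
  have hid : Bq α α = α 0 * Bq α (sr 0) + α 1 * Bq α (sr 1) + α 2 * Bq α (sr 2)
      + α 3 * Bq α (sr 3) + α 4 * Bq α (sr 4) + α 5 * Bq α (sr 5)
      + α 6 * Bq α (sr 6) + α 7 * Bq α (sr 7) := by
    simp [Bq, sr]; ring
  have hterm : ∀ i, α i * Bq α (sr i) ≤ 0 :=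
    fun i => mul_nonpos_iff.mpr (Or.inl ⟨hpos i, h i⟩)
  linarith [hterm 0, hterm 1, hterm 2, hterm 3, hterm 4, hterm 5, hterm 6, hterm 7]

lemma Bq_sr (i : Fin 8) : Bq (sr i) (sr i) = 2 := by fin_cases i <;> decide

-- main induction
lemma mem_of_pos (n : ℕ) : ∀ α : Fin 8 → ℤ, Bq α α = 2 → (∀ i, 0 ≤ α i) →
    ht α ≤ n → α ∈ L120 := by
  induction n with
  | zero =>
    intro α hroot hpos hht
    exfalso
    have hz : ∀ i, α i = 0 := by
      intro i
      have h0 := hpos 0; have h1 := hpos 1; have h2 := hpos 2; have h3 := hpos 3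
      have h4 := hpos 4; have h5 := hpos 5; have h6 := hpos 6; have h7 := hpos 7
      unfold ht at hht
      fin_cases i <;> simp <;> omega
    simp [Bq, hz] at hroot
  | succ n ih =>
    intro α hroot hpos hht
    obtain ⟨i, hci⟩ := exists_pos_inner α hroot hpos
    set β := rf i α with hβ
    have hβroot : Bq β β = 2 := by rw [hβ, Bq_rf]; exact hroot
    rcases sign_lemma β hβroot with hbp | hbn
    · -- β positive: descend
      have hhtβ : ht β ≤ n := by
        rw [hβ, ht_rf]
        have : (n.succ : ℤ) = n + 1 := by push_cast; ring
        omega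
      have hmem := ih β hβroot hbp hhtβ
      obtain ⟨k, hk⟩ := mem_g hmem
      have hαrf : α = rf i β := by rw [hβ, rf_rf]
      have htb := F3 k i
      rcases F2 k i with hcase | hcase
      · have : α = g (tb k.val i.val) := by
          funext j
          rw [hαrf, ← hk]
          exact hcase j
        rw [this]
        exact g_mem htb
      · exfalso
        have hgm := (F1 _ (g_mem htb)).2
        have hz : ∀ j, α j = 0 := by
          intro j
          have h1 : α j = -(g (tb k.val i.val) j) := by rw [hαrf, ← hk]; exact hcase j
          have := hgm j
          have := hpos j
          omega
        simp [Bq, hz] at hroot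
    · -- β nonpositive: α is the simple root sr i
      have h0 : ∀ j, j ≠ i → α j = 0 := by
        intro j hj
        have hβj : β j = α j := by simp [hβ, rf, if_neg hj]
        have := hbn j
        have := hpos j
        omega
      have hα : ∀ j, α j = α i * sr i j := by
        intro j
        by_cases h : j = i
        · subst h; simp [sr]
        · simp [sr, h, h0 j h]
      have hBexp : Bq α α = (α i)^2 * Bq (sr i) (sr i) := by
        simp only [Bq]
        rw [hα 0, hα 1, hα 2, hα 3, hα 4, hα 5, hα 6, hα 7]
        ring
      rw [hroot, Bq_sr i] at hBexp
      have hone : α i = 1 := by nlinarith [hpos i]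
      have : α = sr i := by
        funext j
        rw [hα j, hone, one_mul]
      rw [this]
      exact F4 i

lemma ht_nonneg {α : Fin 8 → ℤ} (hpos : ∀ i, 0 ≤ α i) : 0 ≤ ht α := by
  unfold ht
  linarith [hpos 0, hpos 1, hpos 2, hpos 3, hpos 4, hpos 5, hpos 6, hpos 7]

lemma pos_eq_list : E8Rpos = {α | α ∈ L120} := by
  ext α
  constructor
  · rintro ⟨hroot, hpos⟩
    have hroot' : Bq α α = 2 := by rw [← B_eq]; exact hroot
    have hn : ht α ≤ (ht α).toNat := Int.self_le_toNat _
    exact mem_of_pos (ht α).toNat α hroot' hpos hn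
  · intro h
    obtain ⟨h2, hpos⟩ := F1 α h
    exact ⟨by rw [E8R, Set.mem_setOf_eq, B_eq]; exact h2, hpos⟩

/-- There are 120 positive roots and R = R⁺ ⊔ (−R⁺). -/
theorem e8_positive_roots :
    E8Rpos.ncard = 120 ∧
    (∀ α, α ∈ E8R ↔ (α ∈ E8Rpos ∨ -α ∈ E8Rpos)) ∧
    (∀ α, ¬(α ∈ E8Rpos ∧ -α ∈ E8Rpos)) := by
  refine ⟨?_, ?_, ?_⟩
  · have : E8Rpos = (L120.toFinset : Set (Fin 8 → ℤ)) := by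
      rw [pos_eq_list]
      ext α
      simp [List.mem_toFinset]
    rw [this, Set.ncard_coe_finset, List.toFinset_card_of_nodup F5]
    rfl
  · intro α
    constructor
    · intro hα
      have hroot' : Bq α α = 2 := by rw [← B_eq]; exact hα
      rcases sign_lemma α hroot' with h | h
      · exact Or.inl ⟨hα, h⟩
      · refine Or.inr ⟨?_, ?_⟩
        · show B (-α) (-α) = 2
          rw [B_eq, Bq_negneg, ← B_eq]
          exact hα
        · intro i
          simp only [Pi.neg_apply]
          linarith [h i]
    · rintro (⟨h, _⟩ | ⟨h, _⟩)
      · exact h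
      · have : Bq (-α) (-α) = 2 := by rw [← B_eq]; exact h
        rw [Bq_negneg] at this
        show B α α = 2
        rw [B_eq]; exact this
  · rintro α ⟨⟨hroot, hpos⟩, ⟨_, hneg⟩⟩
    have hz : ∀ i, α i = 0 := by
      intro i
      have := hpos i
      have := hneg i
      simp only [Pi.neg_apply] at *
      omega
    have : Bq α α = 2 := by rw [← B_eq]; exact hroot
    simp [Bq, hz] at this
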